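/- In SL_2 over the ring R = O/π² (O a discrete valuation ring with residue field k), for any a in the kernel of reduction of the lower unitriangular subgroup (i.e. a = lower unitriangular with below-diagonal entry in πR) with a ≠ 1, the intersection U ∩ aUa⁻¹ equals U¹, the subgroup of upper unitriangular matrices with entry in πR. Moreover U ∩ wUw⁻¹ = {1} for w the antidiagonal Weyl element. -/

import Mathlib

set_option linter.unreachableTactic false
set_option linter.unusedTactic false

lemma aux_sq_zero {O : Type*} [CommRing O] (π : O) :
    (Ideal.Quotient.mk (Ideal.span {π ^ 2}) π) ^ 2 = 0 := by
  rw [← map_pow, Ideal.Quotient.eq_zero_iff_mem]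
  exact Ideal.mem_span_singleton_self _

lemma aux_mul_zero {O : Type*} [CommRing O] (π : O)
    (b c : O ⧸ Ideal.span {π ^ 2})
    (hb : b ∈ Ideal.span {Ideal.Quotient.mk (Ideal.span {π ^ 2}) π})
    (hc : c ∈ Ideal.span {Ideal.Quotient.mk (Ideal.span {π ^ 2}) π}) :
    b * c = 0 := by
  rw [Ideal.mem_span_singleton] at hb hc
  obtain ⟨x, rfl⟩ := hb
  obtain ⟨y, rfl⟩ := hc
  have := aux_sq_zero π
  ring_nf
  rw [this, zero_mul, zero_mul]

lemma aux_ann {O : Type*} [CommRing O] [IsDomain O] [IsDiscreteValuationRing O]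
    (π : O) (hπ : Irreducible π) (b c : O ⧸ Ideal.span {π ^ 2})
    (hc : c ∈ Ideal.span {Ideal.Quotient.mk (Ideal.span {π ^ 2}) π})
    (hc0 : c ≠ 0) (hbc : b * c = 0) :
    b ∈ Ideal.span {Ideal.Quotient.mk (Ideal.span {π ^ 2}) π} := by
  obtain ⟨y, rfl⟩ := Ideal.Quotient.mk_surjective b
  rw [Ideal.mem_span_singleton] at hc ⊢
  obtain ⟨t, ht⟩ := hc
  obtain ⟨t₀, rfl⟩ := Ideal.Quotient.mk_surjective t
  rw [← map_mul] at ht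
  subst ht
  rw [← map_mul, Ideal.Quotient.eq_zero_iff_mem, Ideal.mem_span_singleton] at hbc
  have hπt : ¬ π ∣ t₀ := by
    rintro ⟨s, rfl⟩
    exact hc0 (by rw [Ideal.Quotient.eq_zero_iff_mem, Ideal.mem_span_singleton]; exact ⟨s, by ring⟩)
  have hy : π ∣ y := by
    obtain ⟨s, hs⟩ := hbc
    have : y * t₀ = π * s := by
      have hπ0 : π ≠ 0 := hπ.ne_zero
      apply mul_left_cancel₀ hπ0
      linear_combination hs
    rcases hπ.prime.dvd_mul.mp (⟨s, this⟩ : π ∣ y * t₀) with h | h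
    · exact h
    · exact absurd h hπt
  obtain ⟨s, rfl⟩ := hy
  exact ⟨Ideal.Quotient.mk _ s, by rw [← map_mul]⟩

/-- In `SL_2(O/π²)` (`O` a DVR with uniformizer `π`): for every `a` in the kernel of
reduction of the lower unitriangular subgroup (i.e. `a = [[1,0],[c,1]]` with `c ∈ πR`)
with `a ≠ 1`, one has `U ∩ aUa⁻¹ = U¹`, the upper unitriangular matrices with entry in
`πR`; moreover `U ∩ wUw⁻¹ = {1}` for the antidiagonal Weyl element `w = [[0,1],[-1,0]]`. -/
theorem unitriangular_intersections_SL2 {O : Type*} [CommRing O] [IsDomain O]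
    [IsDiscreteValuationRing O] (π : O) (hπ : Irreducible π) :
    let R := O ⧸ Ideal.span {π ^ 2}
    let ϖ : R := Ideal.Quotient.mk _ π
    let G := Matrix.SpecialLinearGroup (Fin 2) R
    let U : Set G := {g | (g : Matrix (Fin 2) (Fin 2) R) 0 0 = 1 ∧
      (g : Matrix (Fin 2) (Fin 2) R) 1 1 = 1 ∧ (g : Matrix (Fin 2) (Fin 2) R) 1 0 = 0}
    let U1 : Set G := {g | g ∈ U ∧ (g : Matrix (Fin 2) (Fin 2) R) 0 1 ∈ Ideal.span {ϖ}}
    (∀ a : G, (a : Matrix (Fin 2) (Fin 2) R) 0 0 = 1 →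
      (a : Matrix (Fin 2) (Fin 2) R) 1 1 = 1 → (a : Matrix (Fin 2) (Fin 2) R) 0 1 = 0 →
      (a : Matrix (Fin 2) (Fin 2) R) 1 0 ∈ Ideal.span {ϖ} → a ≠ 1 →
      U ∩ (fun u => a * u * a⁻¹) '' U = U1) ∧
    (∀ w : G, (w : Matrix (Fin 2) (Fin 2) R) = !![0, 1; -1, 0] →
      U ∩ (fun u => w * u * w⁻¹) '' U = {1}) := by
  intro R ϖ G U U1
  constructor
  · intro a ha00 ha11 ha01 ha10 hane
    set c : R := (a : Matrix (Fin 2) (Fin 2) R) 1 0 with hc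
    have hA : (a : Matrix (Fin 2) (Fin 2) R) = !![1, 0; c, 1] := by
      rw [Matrix.eta_fin_two (a : Matrix (Fin 2) (Fin 2) R), ha00, ha11, ha01]
    have hAinv : ((a⁻¹ : G) : Matrix (Fin 2) (Fin 2) R) = !![1, 0; -c, 1] := by
      rw [Matrix.SpecialLinearGroup.coe_inv, Matrix.adjugate_fin_two, ha00, ha11, ha01, neg_zero]
    have hc0 : c ≠ 0 := by
      intro h
      apply hane
      apply Subtype.ext
      rw [Matrix.SpecialLinearGroup.coe_one, Matrix.one_fin_two, hA, h]
    have hconj : ∀ u : G, (u : Matrix (Fin 2) (Fin 2) R) 0 0 = 1 →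
        (u : Matrix (Fin 2) (Fin 2) R) 1 1 = 1 → (u : Matrix (Fin 2) (Fin 2) R) 1 0 = 0 →
        ((a * u * a⁻¹ : G) : Matrix (Fin 2) (Fin 2) R) =
          !![1 - (u : Matrix (Fin 2) (Fin 2) R) 0 1 * c, (u : Matrix (Fin 2) (Fin 2) R) 0 1;
             -((u : Matrix (Fin 2) (Fin 2) R) 0 1 * c * c),
             1 + (u : Matrix (Fin 2) (Fin 2) R) 0 1 * c] := by
      intro u hu00 hu11 hu10
      set b : R := (u : Matrix (Fin 2) (Fin 2) R) 0 1 with hb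
      have hU : (u : Matrix (Fin 2) (Fin 2) R) = !![1, b; 0, 1] := by
        rw [Matrix.eta_fin_two (u : Matrix (Fin 2) (Fin 2) R), hu00, hu11, hu10]
      rw [Matrix.SpecialLinearGroup.coe_mul, Matrix.SpecialLinearGroup.coe_mul, hA, hU, hAinv,
        Matrix.mul_fin_two, Matrix.mul_fin_two]
      ext i j
      fin_cases i <;> fin_cases j <;> simp <;> ring
    ext g
    simp only [Set.mem_inter_iff, Set.mem_image, Set.mem_setOf_eq, U, U1]
    constructor
    · rintro ⟨⟨hg1, hg2, hg3⟩, u, ⟨hu1, hu2, hu3⟩, hgu⟩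
      refine ⟨⟨hg1, hg2, hg3⟩, ?_⟩
      have hc2 := hconj u hu1 hu2 hu3
      rw [hgu] at hc2
      set b : R := (u : Matrix (Fin 2) (Fin 2) R) 0 1
      have hbc : b * c = 0 := by
        have := hg1
        rw [hc2] at this
        simp at this
        linear_combination this
      have hg01 : (g : Matrix (Fin 2) (Fin 2) R) 0 1 = b := by rw [hc2]; simp
      rw [hg01]
      exact aux_ann π hπ b c ha10 hc0 hbc
    · rintro ⟨⟨hg1, hg2, hg3⟩, hg4⟩
      refine ⟨⟨hg1, hg2, hg3⟩, g, ⟨hg1, hg2, hg3⟩, ?_⟩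
      apply Subtype.ext
      rw [hconj g hg1 hg2 hg3]
      set b : R := (g : Matrix (Fin 2) (Fin 2) R) 0 1
      have hbc : b * c = 0 := aux_mul_zero π b c hg4 ha10
      rw [Matrix.eta_fin_two (g : Matrix (Fin 2) (Fin 2) R), hg1, hg2, hg3, hbc]
      norm_num
      rfl
  · intro w hw
    have hWinv : ((w⁻¹ : G) : Matrix (Fin 2) (Fin 2) R) = !![0, -1; 1, 0] := by
      rw [Matrix.SpecialLinearGroup.coe_inv, Matrix.adjugate_fin_two, hw]
      norm_num
    ext g
    simp only [Set.mem_inter_iff, Set.mem_image, Set.mem_setOf_eq, Set.mem_singleton_iff, U]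
    constructor
    · rintro ⟨⟨hg1, hg2, hg3⟩, u, ⟨hu1, hu2, hu3⟩, hgu⟩
      set b : R := (u : Matrix (Fin 2) (Fin 2) R) 0 1 with hbdef
      have hU : (u : Matrix (Fin 2) (Fin 2) R) = !![1, b; 0, 1] := by
        rw [Matrix.eta_fin_two (u : Matrix (Fin 2) (Fin 2) R), hu1, hu2, hu3]
      have hcoe : ((w * u * w⁻¹ : G) : Matrix (Fin 2) (Fin 2) R) = !![1, 0; -b, 1] := by
        rw [Matrix.SpecialLinearGroup.coe_mul, Matrix.SpecialLinearGroup.coe_mul, hw, hU, hWinv,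
          Matrix.mul_fin_two, Matrix.mul_fin_two]
        ext i j
        fin_cases i <;> fin_cases j <;> simp <;> ring
      rw [hgu] at hcoe
      have hb : b = 0 := by
        have := hg3
        rw [hcoe] at this
        simp at this
        linear_combination this
      apply Subtype.ext
      rw [Matrix.SpecialLinearGroup.coe_one, Matrix.one_fin_two, hcoe, hb, neg_zero]
    · rintro rfl
      have h1 : ((1 : G) : Matrix (Fin 2) (Fin 2) R) = !![1, 0; 0, 1] := by
        rw [Matrix.SpecialLinearGroup.coe_one, Matrix.one_fin_two]
      refine ⟨⟨by rw [h1]; norm_num, by rw [h1]; norm_num, by rw [h1]; norm_num⟩,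
        1, ⟨by rw [h1]; norm_num, by rw [h1]; norm_num, by rw [h1]; norm_num⟩, by rw [mul_one, mul_inv_cancel]⟩
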